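/- Let G be a complete k-edge-colored graph. If every monochromatic subgraph G_{|i} of G is a simple permutation graph (each possibly with its own labeling) and G contains no rainbow triangle, then G is a complete edge-colored permutation graph, i.e., there exist a single labeling ℓ of G and permutations π_1,…,π_k of {1,…,|V|} such that for every i, (G_{|i},ℓ) is a simple permutation graph of π_i. -/

import Mathlib

/-- The edge relation `E` on `V` together with the labeling `ℓ : V ≃ Fin n`
is the simple permutation graph of the permutation `π` of `{1,…,n}`:
`{u,v} ∈ E ⇔ ℓ(u) > ℓ(v) and π⁻¹(ℓ(u)) < π⁻¹(ℓ(v))` (stated symmetrically in `u,v`). -/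
def IsPermGraph {V : Type*} {n : ℕ} (E : V → V → Prop) (ℓ : V ≃ Fin n)
    (π : Equiv.Perm (Fin n)) : Prop :=
  ∀ u v : V, E u v ↔
    ((ℓ v < ℓ u ∧ π⁻¹ (ℓ u) < π⁻¹ (ℓ v)) ∨ (ℓ u < ℓ v ∧ π⁻¹ (ℓ v) < π⁻¹ (ℓ u)))

/-- `c` is the edge-coloring of a complete `k`-edge-colored graph on `V`:
it is symmetric, every pair of distinct vertices receives a color in `{1,…,k}`,
and every color in `{1,…,k}` occurs on some edge. -/
def IsCompleteColoring {V : Type*} (k : ℕ) (c : V → V → ℕ) : Prop :=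
  (∀ u v : V, c u v = c v u) ∧
  (∀ u v : V, u ≠ v → c u v ∈ Finset.Icc 1 k) ∧
  (∀ i ∈ Finset.Icc 1 k, ∃ u v : V, u ≠ v ∧ c u v = i)

/-- The edge relation of the `i`-th monochromatic subgraph `G_{|i}`. -/
def monoEdge {V : Type*} (c : V → V → ℕ) (i : ℕ) : V → V → Prop :=
  fun u v => u ≠ v ∧ c u v = i

/-- The complete edge-colored graph with coloring `c` is a complete edge-colored
permutation graph: there are a labeling `ℓ` and permutations `π i` such that every
monochromatic subgraph `(G_{|i}, ℓ)` is the simple permutation graph of `π i`. -/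
def IsCECPG {V : Type*} [Fintype V] (c : V → V → ℕ) : Prop :=
  ∃ (ℓ : V ≃ Fin (Fintype.card V)) (π : ℕ → Equiv.Perm (Fin (Fintype.card V))),
    ∀ i : ℕ, IsPermGraph (monoEdge c i) ℓ (π i)

/-- `c` contains a rainbow triangle: three vertices whose three connecting edges
have pairwise distinct colors. -/
def HasRainbowTriangle {V : Type*} (c : V → V → ℕ) : Prop :=
  ∃ u v w : V, u ≠ v ∧ u ≠ w ∧ v ≠ w ∧
    c u v ≠ c u w ∧ c u v ≠ c v w ∧ c u w ≠ c v w

section CECPGAux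

variable {V : Type*}

/-- Auxiliary adjacency: edges inside `S` whose color avoids `{α, β}`. -/
def adjH (c : V → V → ℕ) (S : Finset V) (α β : ℕ) (x y : V) : Prop :=
  x ∈ S ∧ y ∈ S ∧ x ≠ y ∧ c x y ≠ α ∧ c x y ≠ β

/-- Reachability through `adjH`. -/
def relH (c : V → V → ℕ) (S : Finset V) (α β : ℕ) : V → V → Prop :=
  Relation.ReflTransGen (adjH c S α β)

variable {c : V → V → ℕ} {S : Finset V} {α β : ℕ}

lemma adjH_symm (hsym : ∀ u v, c u v = c v u) {x y : V}
    (h : adjH c S α β x y) : adjH c S α β y x := by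
  obtain ⟨h1, h2, h3, h4, h5⟩ := h
  exact ⟨h2, h1, h3.symm, by rw [hsym y x]; exact h4, by rw [hsym y x]; exact h5⟩

lemma relH_symm (hsym : ∀ u v, c u v = c v u) {x y : V}
    (h : relH c S α β x y) : relH c S α β y x :=
  by
    induction h with
    | refl => exact Relation.ReflTransGen.refl
    | tail _ hadj ih => exact Relation.ReflTransGen.head (adjH_symm hsym hadj) ih

lemma relH_mem_right {x y : V} (hx : x ∈ S) (h : relH c S α β x y) : y ∈ S := by
  induction h with
  | refl => exact hx
  | tail _ hadj _ => exact hadj.2.1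

lemma color_mem_of_not_adj {x y : V} (hx : x ∈ S) (hy : y ∈ S) (hxy : x ≠ y)
    (h : ¬ adjH c S α β x y) : c x y = α ∨ c x y = β := by
  by_contra hcon
  push_neg at hcon
  exact h ⟨hx, hy, hxy, hcon.1, hcon.2⟩

lemma color_mem_of_not_rel {x y : V} (hx : x ∈ S) (hy : y ∈ S) (hxy : x ≠ y)
    (h : ¬ relH c S α β x y) : c x y = α ∨ c x y = β :=
  color_mem_of_not_adj hx hy hxy (fun ha => h (Relation.ReflTransGen.single ha))

/-- Colors to a fixed outside vertex are constant along components. -/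
lemma constColor
    (hg : ∀ x y z : V, x ≠ y → x ≠ z → y ≠ z →
      (c x y = c x z ∨ c x y = c y z ∨ c x z = c y z))
    {x x' y : V} (hx : relH c S α β x x')
    (hny : ¬ relH c S α β x y) (hy : y ∈ S) : c x y = c x' y := by
  induction hx with
  | refl => rfl
  | @tail b b' hxb hadj ih =>
    have hbS : b ∈ S := hadj.1
    have hb'S : b' ∈ S := hadj.2.1
    have hby : b ≠ y := by rintro rfl; exact hny hxb
    have hb'y : b' ≠ y := by rintro rfl; exact hny (hxb.tail hadj)
    have h1 : ¬ adjH c S α β b y := fun ha => hny (hxb.tail ha)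
    have h2 : ¬ adjH c S α β b' y := fun ha => hny ((hxb.tail hadj).tail ha)
    have hc1 := color_mem_of_not_adj hbS hy hby h1
    have hc2 := color_mem_of_not_adj hb'S hy hb'y h2
    have hbb'α := hadj.2.2.2.1
    have hbb'β := hadj.2.2.2.2
    rw [ih]
    rcases hg b b' y hadj.2.2.1 hby hb'y with h | h | h
    · rcases hc1 with h' | h' <;> rw [h'] at h <;> [exact absurd h hbb'α; exact absurd h hbb'β]
    · rcases hc2 with h' | h' <;> rw [h'] at h <;> [exact absurd h hbb'α; exact absurd h hbb'β]
    · exact h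

lemma rel_stay_closed {T : Finset V}
    (hcl : ∀ x ∈ T, ∀ y ∈ S, y ∉ T → ¬ adjH c S α β x y)
    {x y : V} (hx : x ∈ T) (h : relH c S α β x y) : y ∈ T := by
  induction h with
  | refl => exact hx
  | @tail b b' hxb hadj ih =>
    by_contra hb'
    exact hcl b ih b' hadj.2.1 hb' hadj

end CECPGAux

section Gallai
variable {V : Type*} {c : V → V → ℕ}

/-- Gallai's theorem, disconnection form: every rainbow-triangle-free coloring of a
complete graph on at least two vertices admits two colors α ≠ β such that the graph
of edges avoiding both colors is disconnected. -/
lemma gallai_disc (hsym : ∀ u v, c u v = c v u)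
    (hg : ∀ x y z : V, x ≠ y → x ≠ z → y ≠ z →
      (c x y = c x z ∨ c x y = c y z ∨ c x z = c y z)) :
    ∀ (N : ℕ) (S : Finset V), S.card ≤ N → 2 ≤ S.card →
      ∃ α β, α ≠ β ∧ ∃ x ∈ S, ∃ y ∈ S, ¬ relH c S α β x y := by
  intro N
  induction N with
  | zero => intro S h1 h2; omega
  | succ N ih =>
    intro S hSN hS2
    classical
    obtain ⟨v, hv⟩ := Finset.card_pos.mp (show 0 < S.card by omega)
    set S' := S.erase v with hS'def
    have hS'S : S' ⊆ S := Finset.erase_subset _ _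
    have hS'card : S'.card = S.card - 1 := Finset.card_erase_of_mem hv
    have hvS' : v ∉ S' := Finset.notMem_erase _ _
    by_cases hS'2 : 2 ≤ S'.card
    · obtain ⟨α, β, hab, x1, hx1, y1, hy1, hnr1⟩ := ih S' (by rw [hS'card]; omega) hS'2
      have hmono : ∀ {a b}, adjH c S' α β a b → adjH c S α β a b := by
        rintro a b ⟨h1, h2, h3, h4, h5⟩
        exact ⟨hS'S h1, hS'S h2, h3, h4, h5⟩
      have hx1S : x1 ∈ S := hS'S hx1
      have hy1S : y1 ∈ S := hS'S hy1
      have hvx1 : x1 ≠ v := (Finset.mem_erase.mp hx1).1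
      set A := S'.filter (fun x => c v x ≠ α ∧ c v x ≠ β) with hAdef
      have memA : ∀ {x}, x ∈ A → x ∈ S' ∧ c v x ≠ α ∧ c v x ≠ β := by
        intro x hx; simpa [hAdef] using hx
      have hvne : ∀ {x}, x ∈ S' → v ≠ x := by
        intro x hx heq; exact hvS' (heq ▸ hx)
      by_cases hA : A.Nonempty
      · by_cases hA2 : ∃ x2 ∈ A, ∃ x2' ∈ A, ¬ relH c S' α β x2 x2'
        · obtain ⟨x2, hx2, x2', hx2', hx22⟩ := hA2
          have pairNE : ∀ a ∈ A, ∀ b ∈ A, ¬ relH c S' α β a b → c v a = c v b := by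
            intro a ha b hb hnab
            have hane : a ≠ b := by rintro rfl; exact hnab Relation.ReflTransGen.refl
            have hcab : c a b = α ∨ c a b = β :=
              color_mem_of_not_rel (memA ha).1 (memA hb).1 hane hnab
            rcases hg v a b (hvne (memA ha).1) (hvne (memA hb).1) hane with h | h | h
            · exact h
            · rcases hcab with h' | h' <;> rw [h'] at h <;>
                [exact absurd h (memA ha).2.1; exact absurd h (memA ha).2.2]
            · rcases hcab with h' | h' <;> rw [h'] at h <;>
                [exact absurd h (memA hb).2.1; exact absurd h (memA hb).2.2]
          set δ := c v x2 with hδdef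
          have hδα : δ ≠ α := (memA hx2).2.1
          have hδβ : δ ≠ β := (memA hx2).2.2
          have hδ : ∀ x ∈ A, c v x = δ := by
            intro x hx
            by_cases h : relH c S' α β x x2
            · have hnx : ¬ relH c S' α β x x2' := fun h2 =>
                hx22 ((relH_symm hsym h).trans h2)
              rw [pairNE x hx x2' hx2' hnx, ← pairNE x2 hx2 x2' hx2' hx22]
            · exact pairNE x hx x2 hx2 h
          set Bα := S'.filter (fun x => c v x = α) with hBαdef
          set Bβ := S'.filter (fun x => c v x = β) with hBβdef
          have colorsplit : ∀ x ∈ S', x ∈ A ∨ x ∈ Bα ∨ x ∈ Bβ := by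
            intro x hx
            by_cases h1 : c v x = α
            · exact Or.inr (Or.inl (Finset.mem_filter.mpr ⟨hx, h1⟩))
            · by_cases h2 : c v x = β
              · exact Or.inr (Or.inr (Finset.mem_filter.mpr ⟨hx, h2⟩))
              · exact Or.inl (Finset.mem_filter.mpr ⟨hx, h1, h2⟩)
          by_cases hBα : Bα.Nonempty
          · by_cases hBβ : Bβ.Nonempty
            · obtain ⟨y1', hy1'⟩ := hBα
              obtain ⟨z1, hz1⟩ := hBβ
              have hy1'S : y1' ∈ S' := (Finset.mem_filter.mp hy1').1
              have hy1'α : c v y1' = α := (Finset.mem_filter.mp hy1').2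
              have hz1S : z1 ∈ S' := (Finset.mem_filter.mp hz1).1
              have hz1β : c v z1 = β := (Finset.mem_filter.mp hz1).2
              by_cases hcover : ∀ w ∈ S', ∃ a ∈ A, relH c S' α β w a
              · exfalso
                have claimα : ∀ y ∈ S', c v y = α → ∀ a ∈ A, ¬ relH c S' α β y a →
                    c y a = α := by
                  intro y hy hyα a ha hna
                  have hya : y ≠ a := by rintro rfl; exact hna Relation.ReflTransGen.refl
                  have h1 : c y a = α ∨ c y a = β :=
                    color_mem_of_not_rel hy (memA ha).1 hya hna
                  rcases hg v y a (hvne hy) (hvne (memA ha).1) hya with h | h | h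
                  · rw [hyα, hδ a ha] at h; exact absurd h.symm hδα
                  · rw [hyα] at h; exact h.symm
                  · rw [hδ a ha] at h
                    rcases h1 with h' | h' <;> rw [h'] at h <;>
                      [exact absurd h hδα; exact absurd h hδβ]
                have claimβ : ∀ y ∈ S', c v y = β → ∀ a ∈ A, ¬ relH c S' α β y a →
                    c y a = β := by
                  intro y hy hyβ a ha hna
                  have hya : y ≠ a := by rintro rfl; exact hna Relation.ReflTransGen.refl
                  have h1 : c y a = α ∨ c y a = β :=
                    color_mem_of_not_rel hy (memA ha).1 hya hna
                  rcases hg v y a (hvne hy) (hvne (memA ha).1) hya with h | h | h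
                  · rw [hyβ, hδ a ha] at h; exact absurd h.symm hδβ
                  · rw [hyβ] at h; exact h.symm
                  · rw [hδ a ha] at h
                    rcases h1 with h' | h' <;> rw [h'] at h <;>
                      [exact absurd h hδα; exact absurd h hδβ]
                by_cases hyz : relH c S' α β y1' z1
                · obtain ⟨b, hbA, hnb⟩ : ∃ b ∈ A, ¬ relH c S' α β y1' b := by
                    by_cases h : relH c S' α β y1' x2
                    · exact ⟨x2', hx2', fun h2 => hx22 ((relH_symm hsym h).trans h2)⟩
                    · exact ⟨x2, hx2, h⟩
                  have h1 : c y1' b = α := claimα y1' hy1'S hy1'α b hbA hnb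
                  have hnzb : ¬ relH c S' α β z1 b := fun h2 => hnb (hyz.trans h2)
                  have h2 : c z1 b = β := claimβ z1 hz1S hz1β b hbA hnzb
                  have h3 : c y1' b = c z1 b := constColor hg hyz hnb (memA hbA).1
                  rw [h1, h2] at h3; exact hab h3
                · obtain ⟨az, hazA, hzaz⟩ := hcover z1 hz1S
                  obtain ⟨ay, hayA, hyay⟩ := hcover y1' hy1'S
                  have hn1 : ¬ relH c S' α β y1' az := fun h =>
                    hyz (h.trans (relH_symm hsym hzaz))
                  have e1 : c y1' az = α := claimα y1' hy1'S hy1'α az hazA hn1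
                  have e2 : c z1 y1' = c az y1' :=
                    constColor hg hzaz (fun h => hyz (relH_symm hsym h)) hy1'S
                  have hn2 : ¬ relH c S' α β z1 ay := fun h =>
                    hyz (hyay.trans (relH_symm hsym h))
                  have e3 : c z1 ay = β := claimβ z1 hz1S hz1β ay hayA hn2
                  have e4 : c y1' z1 = c ay z1 :=
                    constColor hg hyay hyz hz1S
                  have eα : c y1' z1 = α := by
                    rw [hsym y1' z1, e2, hsym az y1', e1]
                  have eβ : c y1' z1 = β := by
                    rw [e4, hsym ay z1, e3]
                  exact hab (eα ▸ eβ ▸ rfl)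
              · push_neg at hcover
                obtain ⟨w, hw, hwall⟩ := hcover
                refine ⟨α, β, hab, w, hS'S hw, v, hv, ?_⟩
                intro hrel
                set T := S'.filter (relH c S' α β w) with hTdef
                have hcl : ∀ x ∈ T, ∀ y ∈ S, y ∉ T → ¬ adjH c S α β x y := by
                  intro x hx y hyS hyT hadj
                  obtain ⟨hxS', hwx⟩ := Finset.mem_filter.mp hx
                  by_cases hyv : y = v
                  · have h4 : c x y ≠ α := hadj.2.2.2.1
                    have h5 : c x y ≠ β := hadj.2.2.2.2
                    rw [hyv, hsym x v] at h4 h5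
                    exact hwall x (Finset.mem_filter.mpr ⟨hxS', h4, h5⟩) hwx
                  · have hyS' : y ∈ S' := Finset.mem_erase.mpr ⟨hyv, hyS⟩
                    exact hyT (Finset.mem_filter.mpr
                      ⟨hyS', hwx.tail ⟨hxS', hyS', hadj.2.2.1, hadj.2.2.2⟩⟩)
                have hwT : w ∈ T := Finset.mem_filter.mpr ⟨hw, Relation.ReflTransGen.refl⟩
                have := rel_stay_closed hcl hwT hrel
                exact hvS' (Finset.mem_filter.mp this).1
            · -- Bβ empty, use pair (α, δ)
              refine ⟨α, δ, fun h => hδα h.symm, v, hv, x1, hx1S, ?_⟩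
              intro hrel
              have hcl : ∀ x ∈ ({v} : Finset V), ∀ y ∈ S, y ∉ ({v} : Finset V) →
                  ¬ adjH c S α δ x y := by
                intro x hx y hyS hyT hadj
                rw [Finset.mem_singleton] at hx
                rw [hx] at hadj
                have hyv : y ≠ v := fun h => hadj.2.2.1 h.symm
                have hyS' : y ∈ S' := Finset.mem_erase.mpr ⟨hyv, hyS⟩
                rcases colorsplit y hyS' with h | h | h
                · exact hadj.2.2.2.2 (hδ y h)
                · exact hadj.2.2.2.1 (Finset.mem_filter.mp h).2
                · exact hBβ ⟨y, h⟩
              have := rel_stay_closed hcl (Finset.mem_singleton_self v) hrel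
              exact hvx1 (Finset.mem_singleton.mp this)
          · -- Bα empty, use pair (β, δ)
            refine ⟨β, δ, fun h => hδβ h.symm, v, hv, x1, hx1S, ?_⟩
            intro hrel
            have hcl : ∀ x ∈ ({v} : Finset V), ∀ y ∈ S, y ∉ ({v} : Finset V) →
                ¬ adjH c S β δ x y := by
              intro x hx y hyS hyT hadj
              rw [Finset.mem_singleton] at hx
              rw [hx] at hadj
              have hyv : y ≠ v := fun h => hadj.2.2.1 h.symm
              have hyS' : y ∈ S' := Finset.mem_erase.mpr ⟨hyv, hyS⟩
              rcases colorsplit y hyS' with h | h | h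
              · exact hadj.2.2.2.2 (hδ y h)
              · exact hBα ⟨y, h⟩
              · exact hadj.2.2.2.1 (Finset.mem_filter.mp h).2
            have := rel_stay_closed hcl (Finset.mem_singleton_self v) hrel
            exact hvx1 (Finset.mem_singleton.mp this)
        · -- all pairs in A are connected within S'
          push_neg at hA2
          obtain ⟨a, ha⟩ := hA
          obtain ⟨w0, hw0S, hw0⟩ : ∃ w0 ∈ S', ¬ relH c S' α β a w0 := by
            by_cases h : relH c S' α β a x1
            · exact ⟨y1, hy1, fun h2 => hnr1 ((relH_symm hsym h).trans h2)⟩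
            · exact ⟨x1, hx1, h⟩
          refine ⟨α, β, hab, w0, hS'S hw0S, v, hv, ?_⟩
          intro hrel
          set T := S'.filter (relH c S' α β w0) with hTdef
          have hcl : ∀ x ∈ T, ∀ y ∈ S, y ∉ T → ¬ adjH c S α β x y := by
            intro x hx y hyS hyT hadj
            obtain ⟨hxS', hwx⟩ := Finset.mem_filter.mp hx
            by_cases hyv : y = v
            · have h4 : c x y ≠ α := hadj.2.2.2.1
              have h5 : c x y ≠ β := hadj.2.2.2.2
              rw [hyv, hsym x v] at h4 h5
              exact hw0 ((hA2 a ha x (Finset.mem_filter.mpr ⟨hxS', h4, h5⟩)).trans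
                (relH_symm hsym hwx))
            · have hyS' : y ∈ S' := Finset.mem_erase.mpr ⟨hyv, hyS⟩
              exact hyT (Finset.mem_filter.mpr
                ⟨hyS', hwx.tail ⟨hxS', hyS', hadj.2.2.1, hadj.2.2.2⟩⟩)
          have hwT : w0 ∈ T := Finset.mem_filter.mpr ⟨hw0S, Relation.ReflTransGen.refl⟩
          have := rel_stay_closed hcl hwT hrel
          exact hvS' (Finset.mem_filter.mp this).1
      · -- A empty: v sees everything in {α, β}
        refine ⟨α, β, hab, v, hv, x1, hx1S, ?_⟩
        intro hrel
        have hcl : ∀ x ∈ ({v} : Finset V), ∀ y ∈ S, y ∉ ({v} : Finset V) →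
            ¬ adjH c S α β x y := by
          intro x hx y hyS hyT hadj
          rw [Finset.mem_singleton] at hx
          rw [hx] at hadj
          have hyv : y ≠ v := fun h => hadj.2.2.1 h.symm
          have hyS' : y ∈ S' := Finset.mem_erase.mpr ⟨hyv, hyS⟩
          exact hA ⟨y, Finset.mem_filter.mpr ⟨hyS', hadj.2.2.2.1, hadj.2.2.2.2⟩⟩
        have := rel_stay_closed hcl (Finset.mem_singleton_self v) hrel
        exact hvx1 (Finset.mem_singleton.mp this)
    · -- S has exactly two elements
      have h2 : S.card = 2 := by rw [hS'card] at hS'2; omega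
      obtain ⟨w, hw⟩ := Finset.card_eq_one.mp (by rw [hS'card]; omega : S'.card = 1)
      have hwS' : w ∈ S' := hw ▸ Finset.mem_singleton_self w
      have hwv : w ≠ v := (Finset.mem_erase.mp hwS').1
      have hwS : w ∈ S := hS'S hwS'
      refine ⟨c v w, c v w + 1, by omega, v, hv, w, hwS, ?_⟩
      intro hrel
      rcases Relation.ReflTransGen.cases_head hrel with heq | ⟨b, hadj, _⟩
      · exact hwv heq.symm
      · have hbv : b ≠ v := hadj.2.2.1.symm
        have hbS' : b ∈ S' := Finset.mem_erase.mpr ⟨hbv, hadj.2.1⟩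
        have : b = w := by rw [hw] at hbS'; exact Finset.mem_singleton.mp hbS'
        exact hadj.2.2.2.1 (this ▸ rfl)

end Gallai

section Ord
variable {V : Type*}

/-- A strict total order on a fintype is realized by an equivalence with `Fin`. -/
lemma exists_equiv_fin [Fintype V] (r : V → V → Prop)
    (hirr : ∀ x, ¬ r x x) (htr : ∀ {x y z}, r x y → r y z → r x z)
    (htot : ∀ x y, x ≠ y → r x y ∨ r y x) :
    ∃ e : V ≃ Fin (Fintype.card V), ∀ u v, r u v ↔ e u < e v := by
  classical
  set ρ : V → ℕ := fun x => (Finset.univ.filter (fun y => r y x)).card with hρ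
  have key : ∀ u v, r u v → ρ u < ρ v := by
    intro u v h
    have hsub : insert u (Finset.univ.filter (fun y => r y u)) ⊆
        Finset.univ.filter (fun y => r y v) := by
      intro z hz
      rcases Finset.mem_insert.mp hz with rfl | hz
      · exact Finset.mem_filter.mpr ⟨Finset.mem_univ _, h⟩
      · exact Finset.mem_filter.mpr ⟨Finset.mem_univ _, htr (Finset.mem_filter.mp hz).2 h⟩
    have hnot : u ∉ Finset.univ.filter (fun y => r y u) := by
      simp [hirr u]
    have h1 : ρ u + 1 ≤ ρ v := by
      rw [← Finset.card_insert_of_notMem hnot]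
      exact Finset.card_le_card hsub
    omega
  have key2 : ∀ u v, r u v ↔ ρ u < ρ v := by
    intro u v
    refine ⟨key u v, fun h => ?_⟩
    rcases eq_or_ne u v with rfl | hne
    · exact absurd h (lt_irrefl _)
    · rcases htot u v hne with h1 | h1
      · exact h1
      · have := key v u h1; omega
  have hltcard : ∀ x, ρ x < Fintype.card V := by
    intro x
    have h1 : (Finset.univ.filter (fun y => r y x)) ⊂ Finset.univ :=
      (Finset.ssubset_iff_of_subset (Finset.filter_subset _ _)).mpr
        ⟨x, Finset.mem_univ x, by simp [hirr x]⟩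
    simpa using Finset.card_lt_card h1
  set F : V → Fin (Fintype.card V) := fun x => ⟨ρ x, hltcard x⟩ with hF
  have hFinj : Function.Injective F := by
    intro u v h
    have : ρ u = ρ v := by simpa [hF, Fin.mk.injEq] using h
    by_contra hne
    rcases htot u v hne with h1 | h1
    · have := key u v h1; omega
    · have := key v u h1; omega
  have hbij : Function.Bijective F :=
    (Fintype.bijective_iff_injective_and_card F).mpr ⟨hFinj, by simp⟩
  refine ⟨Equiv.ofBijective F hbij, fun u v => ?_⟩
  rw [key2]
  simp [Equiv.ofBijective_apply, hF, Fin.mk_lt_mk]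

/-- From the permutation-graph hypotheses we extract an injective labeling `e` such
that for any `e`-increasing triple whose pairwise colors lie in `{α, β}`, the
color of the long edge agrees with one of the short edges. -/
lemma exists_e [Fintype V] {c : V → V → ℕ} {k : ℕ} (hc : IsCompleteColoring k c)
    (hmono : ∀ i ∈ Finset.Icc 1 k,
      ∃ (ℓᵢ : V ≃ Fin (Fintype.card V)) (πᵢ : Equiv.Perm (Fin (Fintype.card V))),
        IsPermGraph (monoEdge c i) ℓᵢ πᵢ)
    (α β : ℕ) :
    ∃ e : V → ℕ, Function.Injective e ∧
      ∀ x y z : V, x ≠ y → x ≠ z → y ≠ z → e x < e y → e y < e z →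
        (c x y = α ∨ c x y = β) → (c y z = α ∨ c y z = β) → (c x z = α ∨ c x z = β) →
        (c x z = c x y ∨ c x z = c y z) := by
  by_cases hk : α ∈ Finset.Icc 1 k
  · obtain ⟨ℓa, πa, hperm⟩ := hmono α hk
    set e : V → ℕ := fun x => (ℓa x : ℕ) with he
    set g : V → ℕ := fun x => ((πa⁻¹ (ℓa x)) : ℕ) with hgdef
    have hginj : Function.Injective g := by
      intro u v h
      exact ℓa.injective ((πa⁻¹ : Equiv.Perm _).injective (Fin.val_injective h))
    have key : ∀ u v : V, u ≠ v →
        (c u v = α ↔ (e v < e u ∧ g u < g v) ∨ (e u < e v ∧ g v < g u)) := by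
      intro u v hne
      have h1 := hperm u v
      simp only [monoEdge] at h1
      constructor
      · intro h
        rcases h1.mp ⟨hne, h⟩ with ⟨h2, h3⟩ | ⟨h2, h3⟩
        · exact Or.inl ⟨h2, h3⟩
        · exact Or.inr ⟨h2, h3⟩
      · intro h
        rcases h with ⟨h2, h3⟩ | ⟨h2, h3⟩
        · exact (h1.mpr (Or.inl ⟨h2, h3⟩)).2
        · exact (h1.mpr (Or.inr ⟨h2, h3⟩)).2
    refine ⟨e, fun u v h => ℓa.injective (Fin.val_injective h), ?_⟩
    intro x y z hxy hxz hyz hexy heyz hcxy hcyz hcxz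
    by_cases h1 : c x y = α
    · by_cases h2 : c y z = α
      · left
        rw [h1]
        have k1 := (key x y hxy).mp h1
        have k2 := (key y z hyz).mp h2
        have hgyx : g y < g x := by
          rcases k1 with ⟨h3, _⟩ | ⟨_, h4⟩
          · omega
          · exact h4
        have hgzy : g z < g y := by
          rcases k2 with ⟨h3, _⟩ | ⟨_, h4⟩
          · omega
          · exact h4
        exact (key x z hxz).mpr (Or.inr ⟨hexy.trans heyz, hgzy.trans hgyx⟩)
      · have h2' : c y z = β := hcyz.resolve_left h2
        by_cases h3 : c x z = α
        · left; rw [h3, h1]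
        · right; rw [hcxz.resolve_left h3, h2']
    · have h1' : c x y = β := hcxy.resolve_left h1
      by_cases h2 : c y z = α
      · by_cases h3 : c x z = α
        · right; rw [h3, h2]
        · left; rw [hcxz.resolve_left h3, h1']
      · have h2' : c y z = β := hcyz.resolve_left h2
        have hgxy : g x < g y := by
          have hno : ¬ ((e y < e x ∧ g x < g y) ∨ (e x < e y ∧ g y < g x)) :=
            fun h => h1 ((key x y hxy).mpr h)
          push_neg at hno
          have := hno.2 hexy
          have hne : g x ≠ g y := fun h => hxy (hginj h)
          omega
        have hgyz : g y < g z := by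
          have hno : ¬ ((e z < e y ∧ g y < g z) ∨ (e y < e z ∧ g z < g y)) :=
            fun h => h2 ((key y z hyz).mpr h)
          push_neg at hno
          have := hno.2 heyz
          have hne : g y ≠ g z := fun h => hyz (hginj h)
          omega
        have h3 : c x z ≠ α := by
          intro h
          rcases (key x z hxz).mp h with ⟨h4, _⟩ | ⟨_, h5⟩
          · have := hexy.trans heyz; omega
          · have := hgxy.trans hgyz; omega
        left
        rw [hcxz.resolve_left h3, h1']
  · refine ⟨fun x => ((Fintype.equivFin V) x : ℕ),
      fun u v h => (Fintype.equivFin V).injective (Fin.val_injective h), ?_⟩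
    intro x y z hxy hxz hyz _ _ hcxy hcyz hcxz
    have hα : ∀ u v : V, u ≠ v → c u v ≠ α := fun u v hne hh => hk (hh ▸ hc.2.1 u v hne)
    left
    rw [hcxz.resolve_left (hα x z hxz), hcxy.resolve_left (hα x y hxy)]

end Ord





section MainLemma
variable {V : Type*}

def GoodOn (c : V → V → ℕ) (S : Finset V) (f : V → ℚ) : Prop :=
  Set.InjOn f ↑S ∧ ∀ x ∈ S, ∀ y ∈ S, ∀ z ∈ S, f x < f y → f y < f z →
    (c x z = c x y ∨ c x z = c y z)


lemma div_lt_div_same_denom {a b d : ℚ} (hd : 0 < d) : a / d < b / d ↔ a < b := by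
  rw [div_lt_div_iff₀ hd hd]
  exact mul_lt_mul_iff_of_pos_right hd

lemma rank_lt_rank_iff {T : Finset V} (h : V → ℚ) {u v : V} (hu : u ∈ T) (hv : v ∈ T) :
    ((T.filter (fun y => h y < h u)).card < (T.filter (fun y => h y < h v)).card)
      ↔ h u < h v := by
  classical
  have forward : ∀ {a b : V}, a ∈ T → h a < h b →
      (T.filter (fun y => h y < h a)).card < (T.filter (fun y => h y < h b)).card := by
    intro a b ha hab
    have hsub : insert a (T.filter (fun y => h y < h a)) ⊆ T.filter (fun y => h y < h b) := by
      intro z hz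
      rcases Finset.mem_insert.mp hz with rfl | hz
      · exact Finset.mem_filter.mpr ⟨ha, hab⟩
      · obtain ⟨hz1, hz2⟩ := Finset.mem_filter.mp hz
        exact Finset.mem_filter.mpr ⟨hz1, hz2.trans hab⟩
    have hnot : a ∉ T.filter (fun y => h y < h a) := by simp
    have h1 : (T.filter (fun y => h y < h a)).card + 1 ≤
        (T.filter (fun y => h y < h b)).card := by
      rw [← Finset.card_insert_of_notMem hnot]
      exact Finset.card_le_card hsub
    omega
  constructor
  · intro hcard
    rcases lt_trichotomy (h u) (h v) with h1 | h1 | h1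
    · exact h1
    · rw [h1] at hcard; exact absurd hcard (lt_irrefl _)
    · exact absurd (forward hv h1) (by omega)
  · exact forward hu

set_option maxHeartbeats 2000000 in
lemma main_lemma [Fintype V] {c : V → V → ℕ} {k : ℕ} (hc : IsCompleteColoring k c)
    (hg : ∀ x y z : V, x ≠ y → x ≠ z → y ≠ z →
      (c x y = c x z ∨ c x y = c y z ∨ c x z = c y z))
    (hmono : ∀ i ∈ Finset.Icc 1 k,
      ∃ (ℓᵢ : V ≃ Fin (Fintype.card V)) (πᵢ : Equiv.Perm (Fin (Fintype.card V))),
        IsPermGraph (monoEdge c i) ℓᵢ πᵢ) :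
    ∀ (N : ℕ) (S : Finset V), S.card ≤ N → ∃ f : V → ℚ, GoodOn c S f := by
  classical
  have hsym := hc.1
  have small : ∀ (S : Finset V), S.card ≤ 1 → GoodOn c S (fun _ => (0 : ℚ)) := by
    intro S hS
    constructor
    · intro x hx y hy _
      exact Finset.card_le_one.mp hS x hx y hy
    · intro x _ y _ z _ h1 _
      exact absurd h1 (lt_irrefl _)
  intro N
  induction N with
  | zero =>
    intro S hS
    exact ⟨_, small S (by omega)⟩
  | succ N ih =>
    intro S hSN
    by_cases h1 : S.card ≤ 1
    · exact ⟨_, small S h1⟩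
    have hS2 : 2 ≤ S.card := by omega
    obtain ⟨α, β, hab, x0, hx0, y0, hy0, hsep⟩ :=
      gallai_disc hsym hg S.card S le_rfl hS2
    obtain ⟨e, einj, etri⟩ := exists_e hc hmono α β
    set R := relH c S α β with hR
    have Rsymm : ∀ {x y}, R x y → R y x := fun h => relH_symm hsym h
    set C : V → Finset V := fun x => S.filter (fun y => R x y) with hC
    have hCsub : ∀ x, C x ⊆ S := fun x => Finset.filter_subset _ _
    have hmemC : ∀ {x y}, y ∈ C x ↔ (y ∈ S ∧ R x y) := fun {x y} => Finset.mem_filter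
    have hself : ∀ {x}, x ∈ S → x ∈ C x := fun hx => hmemC.mpr ⟨hx, Relation.ReflTransGen.refl⟩
    have hCeq : ∀ {x y}, R x y → C x = C y := by
      intro x y h
      ext z
      simp only [hmemC]
      exact ⟨fun ⟨hz, hz2⟩ => ⟨hz, (Rsymm h).trans hz2⟩, fun ⟨hz, hz2⟩ => ⟨hz, h.trans hz2⟩⟩
    have hproper : ∀ x ∈ S, (C x).card < S.card := by
      intro x hx
      have hex : ∃ w ∈ S, w ∉ C x := by
        by_cases h : R x x0
        · exact ⟨y0, hy0, fun hy => hsep ((Rsymm h).trans (hmemC.mp hy).2)⟩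
        · exact ⟨x0, hx0, fun hy => h (hmemC.mp hy).2⟩
      obtain ⟨w, hw1, hw2⟩ := hex
      exact Finset.card_lt_card ((Finset.ssubset_iff_of_subset (hCsub x)).mpr ⟨w, hw1, hw2⟩)
    set inner : Finset V → (V → ℚ) :=
      fun T => if h : ∃ f, GoodOn c T f then h.choose else fun _ => 0 with hinner
    have hinnerGood : ∀ x ∈ S, GoodOn c (C x) (inner (C x)) := by
      intro x hx
      have hex : ∃ f, GoodOn c (C x) f := ih (C x) (by have := hproper x hx; omega)
      rw [hinner]
      simp only [dif_pos hex]
      exact hex.choose_spec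
    set κ : V → ℕ := fun x => (C x).sup e with hκ
    set rk : V → ℕ :=
      fun x => ((C x).filter (fun y => inner (C x) y < inner (C x) x)).card with hrk
    set f : V → ℚ := fun x => (κ x : ℚ) + (rk x : ℚ) / ((C x).card + 1) with hf
    have hfrac0 : ∀ x, 0 ≤ (rk x : ℚ) / ((C x).card + 1) := by
      intro x
      positivity
    have hfrac1 : ∀ x, (rk x : ℚ) / ((C x).card + 1) < 1 := by
      intro x
      rw [div_lt_one (by positivity)]
      have h2 : rk x ≤ (C x).card := Finset.card_filter_le _ _
      have h3 : (rk x : ℚ) ≤ ((C x).card : ℚ) := by exact_mod_cast h2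
      linarith
    have hκmem : ∀ x ∈ S, ∃ p, p ∈ S ∧ R x p ∧ e p = κ x := by
      intro x hx
      obtain ⟨p, hp, hpe⟩ := Finset.exists_mem_eq_sup (C x) ⟨x, hself hx⟩ e
      obtain ⟨hp1, hp2⟩ := hmemC.mp hp
      exact ⟨p, hp1, hp2, hpe.symm⟩
    have hκne : ∀ x ∈ S, ∀ y ∈ S, ¬ R x y → κ x ≠ κ y := by
      intro x hx y hy hnr heq
      obtain ⟨p, hp1, hp2, hp3⟩ := hκmem x hx
      obtain ⟨q, hq1, hq2, hq3⟩ := hκmem y hy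
      have hpq : p = q := einj (by rw [hp3, hq3, heq])
      exact hnr (hp2.trans (Rsymm (hpq ▸ hq2)))
    have hflt : ∀ x y, κ x < κ y → f x < f y := by
      intro x y h
      have h1 : f x < (κ x : ℚ) + 1 := by
        rw [hf]; simp only
        have := hfrac1 x; linarith
      have h2 : (κ x : ℚ) + 1 ≤ (κ y : ℚ) := by exact_mod_cast h
      have h3 : (κ y : ℚ) ≤ f y := by
        rw [hf]; simp only
        have := hfrac0 y; linarith
      linarith
    have hκlt : ∀ x ∈ S, ∀ y ∈ S, ¬ R x y → f x < f y → κ x < κ y := by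
      intro x hx y hy hnr hlt
      rcases lt_trichotomy (κ x) (κ y) with h | h | h
      · exact h
      · exact absurd h (hκne x hx y hy hnr)
      · exact absurd (hflt y x h) (by linarith)
    have hrkeq : ∀ {x y}, R x y → rk y =
        ((C x).filter (fun w => inner (C x) w < inner (C x) y)).card := by
      intro x y h
      rw [hrk]
      simp only
      rw [hCeq h]
    have hsame : ∀ x ∈ S, ∀ y ∈ S, R x y →
        (f x < f y ↔ inner (C x) x < inner (C x) y) := by
      intro x hx y hy hr
      have hκeq : κ x = κ y := by rw [hκ]; simp only; rw [hCeq hr]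
      have hcards : (C x).card = (C y).card := by rw [hCeq hr]
      have hfx : f x = (κ x : ℚ) + (rk x : ℚ) / ((C x).card + 1) := rfl
      have hfy : f y = (κ x : ℚ) + (rk y : ℚ) / ((C x).card + 1) := by
        rw [hf]; simp only; rw [← hκeq, ← hcards]
      have hdpos : (0 : ℚ) < ((C x).card + 1) := by positivity
      rw [hfx, hfy, add_lt_add_iff_left, div_lt_div_same_denom hdpos, Nat.cast_lt]
      have h1 : rk x = ((C x).filter (fun w => inner (C x) w < inner (C x) x)).card :=
        hrkeq (Relation.ReflTransGen.refl)
      rw [h1, hrkeq hr]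
      exact rank_lt_rank_iff (inner (C x)) (hself hx) (hmemC.mpr ⟨hy, hr⟩)
    have hinj : Set.InjOn f ↑S := by
      intro x hx y hy hfeq
      by_contra hne
      by_cases hr : R x y
      · have h1 := (hsame x hx y hy hr)
        have h2 := (hsame y hy x hx (Rsymm hr))
        have hCyx : C y = C x := hCeq (Rsymm hr)
        have heqi : inner (C x) x = inner (C x) y := by
          rcases lt_trichotomy (inner (C x) x) (inner (C x) y) with h | h | h
          · exact absurd (h1.mpr h) (by rw [hfeq]; exact lt_irrefl _)
          · exact h
          · have := h2.mpr (by rw [hCyx]; exact h)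
            exact absurd this (by rw [hfeq]; exact lt_irrefl _)
        exact hne ((hinnerGood x hx).1 (by exact_mod_cast hself hx)
          (by exact_mod_cast hmemC.mpr ⟨hy, hr⟩) heqi)
      · rcases lt_trichotomy (κ x) (κ y) with h | h | h
        · exact absurd hfeq (ne_of_lt (hflt x y h))
        · exact absurd h (hκne x hx y hy hr)
        · exact absurd hfeq.symm (ne_of_lt (hflt y x h))
    refine ⟨f, hinj, ?_⟩
    intro x hx y hy z hz hxy hyz
    have hnexy : x ≠ y := fun h => absurd hxy (by rw [h]; exact lt_irrefl _)
    have hneyz : y ≠ z := fun h => absurd hyz (by rw [h]; exact lt_irrefl _)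
    have hnexz : x ≠ z := fun h => absurd (hxy.trans hyz) (by rw [h]; exact lt_irrefl _)
    by_cases hrxy : R x y
    · by_cases hryz : R y z
      · have hCxy := hCeq hrxy
        have h1 : inner (C x) x < inner (C x) y := (hsame x hx y hy hrxy).mp hxy
        have h2 : inner (C x) y < inner (C x) z := by
          have := (hsame y hy z hz hryz).mp hyz
          rwa [← hCxy] at this
        exact (hinnerGood x hx).2 x (hself hx) y (hmemC.mpr ⟨hy, hrxy⟩) z
          (hmemC.mpr ⟨hz, hrxy.trans hryz⟩) h1 h2
      · right
        have hnxz : ¬ R x z := fun h => hryz ((Rsymm hrxy).trans h)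
        exact constColor hg hrxy hnxz hz
    · by_cases hryz : R y z
      · left
        have h := constColor hg hryz (fun h => hrxy (Rsymm h)) hx
        rw [hsym x z, hsym x y]
        exact h.symm ▸ rfl
      · by_cases hrxz : R x z
        · exfalso
          have hκxz : κ x = κ z := by rw [hκ]; simp only; rw [hCeq hrxz]
          have h1 := hκlt x hx y hy hrxy hxy
          have h2 := hκlt y hy z hz hryz hyz
          omega
        · have h1 := hκlt x hx y hy hrxy hxy
          have h2 := hκlt y hy z hz hryz hyz
          obtain ⟨px, hpx1, hpx2, hpx3⟩ := hκmem x hx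
          obtain ⟨py, hpy1, hpy2, hpy3⟩ := hκmem y hy
          obtain ⟨pz, hpz1, hpz2, hpz3⟩ := hκmem z hz
          have cross : ∀ u ∈ S, ∀ w ∈ S, ¬ R u w → ∀ p, R u p → ∀ q, R w q →
              c u w = c p q := by
            intro u hu w hw hnr p hp q hq
            have hA : c u w = c p w := constColor hg hp hnr hw
            have hnwp : ¬ R w p := fun h => hnr (hp.trans (Rsymm h))
            have hB : c w p = c q p := constColor hg hq hnwp (relH_mem_right hu hp)
            rw [hA, hsym p w, hB, hsym q p]
          have exy : c x y = c px py := cross x hx y hy hrxy px hpx2 py hpy2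
          have eyz : c y z = c py pz := cross y hy z hz hryz py hpy2 pz hpz2
          have exz : c x z = c px pz := cross x hx z hz hrxz px hpx2 pz hpz2
          have hd1 : px ≠ py := fun h => (by omega : κ x ≠ κ y) (by rw [← hpx3, ← hpy3, h])
          have hd2 : py ≠ pz := fun h => (by omega : κ y ≠ κ z) (by rw [← hpy3, ← hpz3, h])
          have hd3 : px ≠ pz := fun h => (by omega : κ x ≠ κ z) (by rw [← hpx3, ← hpz3, h])
          have hcxy := color_mem_of_not_rel hx hy hnexy hrxy
          have hcyz := color_mem_of_not_rel hy hz hneyz hryz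
          have hcxz := color_mem_of_not_rel hx hz hnexz hrxz
          have := etri px py pz hd1 hd3 hd2
            (by rw [hpx3, hpy3]; exact h1) (by rw [hpy3, hpz3]; exact h2)
            (by rw [← exy]; exact hcxy) (by rw [← eyz]; exact hcyz)
            (by rw [← exz]; exact hcxz)
          rcases this with h | h
          · left; rw [exz, h, ← exy]
          · right; rw [exz, h, ← eyz]

end MainLemma


/-- If every monochromatic subgraph of the complete `k`-edge-colored
graph `G` is a simple permutation graph (each possibly with its own labeling) and `G`
has no rainbow triangle, then there are a single labeling `ℓ` and permutations
`π_1,…,π_k` making `(G,ℓ)` a complete `k`-edge-colored permutation graph. -/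
theorem stmt1 {V : Type*} [Fintype V] [Nonempty V] (k : ℕ) (c : V → V → ℕ)
    (hc : IsCompleteColoring k c)
    (hmono : ∀ i ∈ Finset.Icc 1 k,
      ∃ (ℓᵢ : V ≃ Fin (Fintype.card V)) (πᵢ : Equiv.Perm (Fin (Fintype.card V))),
        IsPermGraph (monoEdge c i) ℓᵢ πᵢ)
    (hnr : ¬ HasRainbowTriangle c) :
    ∃ (ℓ : V ≃ Fin (Fintype.card V)) (π : ℕ → Equiv.Perm (Fin (Fintype.card V))),
      ∀ i ∈ Finset.Icc 1 k, IsPermGraph (monoEdge c i) ℓ (π i) := by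
  classical
  have hsym := hc.1
  have hg : ∀ x y z : V, x ≠ y → x ≠ z → y ≠ z →
      (c x y = c x z ∨ c x y = c y z ∨ c x z = c y z) := by
    intro x y z h1 h2 h3
    by_contra hcon
    push_neg at hcon
    exact hnr ⟨x, y, z, h1, h2, h3, hcon.1, hcon.2.1, hcon.2.2⟩
  obtain ⟨f, hinj, htri⟩ := main_lemma hc hg hmono Finset.univ.card Finset.univ le_rfl
  have hfinj : Function.Injective f := fun u v h =>
    hinj (by simp) (by simp) h
  have htri' : ∀ x y z : V, f x < f y → f y < f z →
      (c x z = c x y ∨ c x z = c y z) := fun x y z h1 h2 =>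
    htri x (Finset.mem_univ x) y (Finset.mem_univ y) z (Finset.mem_univ z) h1 h2
  obtain ⟨ℓe, hℓ⟩ := exists_equiv_fin (fun u v => f u < f v)
    (fun x => lt_irrefl _) (fun h1 h2 => h1.trans h2)
    (fun x y h => (hfinj.ne h).lt_or_gt)
  have hsto : ∀ i : ℕ, ∃ g : V ≃ Fin (Fintype.card V), ∀ u v : V,
      ((f u < f v ∧ c u v ≠ i) ∨ (f v < f u ∧ c u v = i)) ↔ g u < g v := by
    intro i
    apply exists_equiv_fin
    · rintro x (⟨h, _⟩ | ⟨h, _⟩) <;> exact lt_irrefl _ h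
    · rintro x y z (⟨hxy1, hxy2⟩ | ⟨hxy1, hxy2⟩) (⟨hyz1, hyz2⟩ | ⟨hyz1, hyz2⟩)
      · -- x<y, ¬i ; y<z, ¬i
        left
        refine ⟨hxy1.trans hyz1, ?_⟩
        intro hzi
        rcases htri' x y z hxy1 hyz1 with h | h
        · exact hxy2 (h ▸ hzi)
        · exact hyz2 (h ▸ hzi)
      · -- x<y, ¬i ; z<y, i
        rcases lt_trichotomy (f x) (f z) with h | h | h
        · left
          refine ⟨h, ?_⟩
          rcases htri' x z y h hyz1 with h' | h'
          · intro hi; rw [← h'] at hi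
            exact hxy2 hi
          · intro _
            rw [hsym z y, hyz2] at h'
            exact hxy2 h'
        · exact absurd (hsym x y ▸ hxy2) (by
            have hxz : x = z := hfinj h
            rw [hxz]
            intro hcon
            exact hcon (hsym z y ▸ hyz2))
        · right
          refine ⟨h, ?_⟩
          rcases htri' z x y h hxy1 with h' | h'
          · -- c z y = c z x
            rw [hsym z y, hyz2] at h'
            rw [hsym x z, ← h']
          · -- c z y = c x y
            rw [hsym z y, hyz2] at h'
            exact absurd h'.symm hxy2
      · -- y<x, i ; y<z, ¬i
        rcases lt_trichotomy (f x) (f z) with h | h | h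
        · left
          refine ⟨h, ?_⟩
          rcases htri' y x z hxy1 h with h' | h'
          · -- c y z = c y x
            rw [hsym y x, hxy2] at h'
            exact absurd h' hyz2
          · -- c y z = c x z
            intro hi; rw [hi] at h'
            exact hyz2 h'
        · exfalso
          have hxz : x = z := hfinj h
          rw [← hxz] at hyz2
          exact hyz2 (hsym y x ▸ hxy2)
        · right
          refine ⟨h, ?_⟩
          rcases htri' y z x hyz1 h with h' | h'
          · -- c y x = c y z
            rw [hsym y x, hxy2] at h'
            exact absurd h'.symm hyz2
          · -- c y x = c z x
            rw [hsym y x, hxy2] at h'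
            rw [hsym x z, ← h']
      · -- y<x, i ; z<y, i
        right
        refine ⟨hyz1.trans hxy1, ?_⟩
        rcases htri' z y x hyz1 hxy1 with h | h
        · rw [hsym x z, h, hsym z y]
          exact hyz2
        · rw [hsym x z, h, hsym y x]
          exact hxy2
    · intro x y hne
      rcases (hfinj.ne hne).lt_or_gt with h | h
      · by_cases hi : c x y = i
        · right; exact Or.inr ⟨h, hsym x y ▸ hi⟩
        · left; exact Or.inl ⟨h, hi⟩
      · by_cases hi : c x y = i
        · left; exact Or.inr ⟨h, hi⟩
        · right; exact Or.inl ⟨h, fun hh => hi (hsym x y ▸ hh)⟩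
  choose gs hgs using hsto
  refine ⟨ℓe, fun i => (ℓe.symm.trans (gs i)).symm, ?_⟩
  intro i _ u v
  have hπ : ∀ w : V, ((ℓe.symm.trans (gs i)).symm)⁻¹ (ℓe w) = gs i w := by
    intro w
    simp [Equiv.Perm.inv_def]
  rw [hπ u, hπ v]
  constructor
  · rintro ⟨hne, hci⟩
    rcases (hfinj.ne hne).lt_or_gt with h | h
    · right
      exact ⟨(hℓ u v).mp h, (hgs i v u).mp (Or.inr ⟨h, hsym v u ▸ hci⟩)⟩
    · left
      exact ⟨(hℓ v u).mp h, (hgs i u v).mp (Or.inr ⟨h, hci⟩)⟩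
  · rintro (⟨h1, h2⟩ | ⟨h1, h2⟩)
    · have hvu : f v < f u := (hℓ v u).mpr h1
      rcases (hgs i u v).mpr h2 with ⟨h3, _⟩ | ⟨_, h4⟩
      · exact absurd h3 (by exact fun hh => absurd (hvu.trans hh) (lt_irrefl _))
      · exact ⟨fun hh => absurd hvu (by rw [hh]; exact lt_irrefl _), h4⟩
    · have huv : f u < f v := (hℓ u v).mpr h1
      rcases (hgs i v u).mpr h2 with ⟨h3, _⟩ | ⟨_, h4⟩
      · exact absurd h3 (by exact fun hh => absurd (huv.trans hh) (lt_irrefl _))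
      · exact ⟨fun hh => absurd huv (by rw [hh]; exact lt_irrefl _), hsym v u ▸ h4⟩
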